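/- Let k ≥ 2, γ > 0, α > 0 with α small enough that (c+1)²·α·n^{k−1} < γ·C(n−1,k−1) for all large n, where c is a positive integer. Let H be an n-vertex k-graph with (c+1)·δ_1(H) > (1+γ)·C(n−1,k−1). Then for n sufficiently large, every set of c+1 vertices of H contains two vertices u, v such that the number of (k−1)-sets S with both S∪{u} and S∪{v} edges of H is at least 2α·n^{k−1}. -/

import Mathlib

private lemma stmt6_three_mul_le (m : ℕ) : 3 * m ≤ 2 + m * m := by
  rcases m with _ | _ | m
  · simp
  · simp
  · nlinarith

set_option maxHeartbeats 1600000 in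
/-- If (c+1)·δ₁(H) > (1+γ)·C(n−1,k−1) then, for large n, every set of c+1
vertices contains two that are (2α,1)-reachable: they have at least
2α·n^{k−1} common reachable (k−1)-sets. -/
theorem stmt_6 (k c : ℕ) (hk : 2 ≤ k) (hc : 1 ≤ c) (γ α : ℝ)
    (hγ : 0 < γ) (hα : 0 < α) :
    ∃ n₀ : ℕ, ∀ n : ℕ, n₀ ≤ n →
      ((c + 1 : ℝ)^2 * α * (n : ℝ)^(k-1) < γ * ((n-1).choose (k-1) : ℝ)) →
      ∀ (V : Type) [Fintype V] [DecidableEq V], Fintype.card V = n →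
      ∀ H : Finset (Finset V), (∀ e ∈ H, e.card = k) →
      (∀ w : V, (1 + γ) * ((n-1).choose (k-1) : ℝ)
        < (c + 1 : ℝ) * ((H.filter (fun e => w ∈ e)).card : ℝ)) →
      ∀ T : Finset V, T.card = c + 1 →
      ∃ u ∈ T, ∃ v ∈ T, u ≠ v ∧
        2 * α * (n : ℝ)^(k-1) ≤
          (((Finset.univ.powersetCard (k-1) : Finset (Finset V)).filter
            (fun S => S ∪ {u} ∈ H ∧ S ∪ {v} ∈ H)).card : ℝ) := by
  refine ⟨k + ⌈((c+1)*(k-1) : ℝ)/γ⌉₊, fun n hn hsmall V _ _ hcard H hedge hdeg T hT => ?_⟩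
  by_contra hcon
  push_neg at hcon
  set r := k - 1 with hr
  have hr1 : 1 ≤ r := by omega
  have hnk : k ≤ n := le_trans (Nat.le_add_right _ _) hn
  have hrn : r < n := by omega
  set P : Finset (Finset V) := Finset.univ.powersetCard r with hP
  set f : V → Finset V → ℕ := fun w S => if S ∪ {w} ∈ H then 1 else 0 with hf
  -- Step 1: degree of w is at most the number of (k-1)-sets S with S ∪ {w} ∈ H
  have hdegN : ∀ w : V, (H.filter (fun e => w ∈ e)).card ≤ ∑ S ∈ P, f w S := by
    intro w
    have hc1 : ∑ S ∈ P, f w S = (P.filter (fun S => S ∪ {w} ∈ H)).card :=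
      (Finset.card_filter _ _).symm
    rw [hc1]
    apply Finset.card_le_card_of_injOn (fun e => e.erase w)
    · intro e he
      simp only [Finset.mem_coe, Finset.mem_filter] at he
      rw [Finset.mem_coe, Finset.mem_filter]
      refine ⟨Finset.mem_powersetCard.2 ⟨Finset.subset_univ _, ?_⟩, ?_⟩
      · rw [Finset.card_erase_of_mem he.2, hedge e he.1]
      · rw [Finset.union_comm, ← Finset.insert_eq, Finset.insert_erase he.2]; exact he.1
    · intro e he e' he' hee
      simp only [Finset.coe_filter, Set.mem_setOf_eq] at he he'
      have hee' : e.erase w = e'.erase w := hee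
      rw [← Finset.insert_erase he.2, ← Finset.insert_erase he'.2, hee']
  set m : Finset V → ℕ := fun S => ∑ w ∈ T, f w S with hm
  have hswap : ∑ w ∈ T, ∑ S ∈ P, f w S = ∑ S ∈ P, m S := Finset.sum_comm
  -- pair counts
  have hpair : ∀ u v : V, ∑ S ∈ P, f u S * f v S
      = (P.filter (fun S => S ∪ {u} ∈ H ∧ S ∪ {v} ∈ H)).card := by
    intro u v
    rw [Finset.card_filter]
    refine Finset.sum_congr rfl fun S _ => ?_
    by_cases h1 : S ∪ {u} ∈ H <;> by_cases h2 : S ∪ {v} ∈ H <;> simp [hf, h1, h2, -Finset.union_singleton]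
  have hsq : ∀ S : Finset V, m S * m S = m S + ∑ u ∈ T, ∑ v ∈ T.erase u, f u S * f v S := by
    intro S
    have h1 : m S * m S = ∑ u ∈ T, ∑ v ∈ T, f u S * f v S := by
      rw [hm, Finset.sum_mul_sum]
    rw [h1, hm, ← Finset.sum_add_distrib]
    refine Finset.sum_congr rfl fun u hu => ?_
    rw [← Finset.add_sum_erase _ (fun v => f u S * f v S) hu]
    congr 1
    by_cases h : S ∪ {u} ∈ H <;> simp [hf, h]
  set B : ℕ := ∑ u ∈ T, ∑ v ∈ T.erase u,
      (P.filter (fun S => S ∪ {u} ∈ H ∧ S ∪ {v} ∈ H)).card with hB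
  -- Step 2: inclusion-exclusion type counting inequality
  have hkey : 2 * ∑ S ∈ P, m S ≤ 2 * P.card + B := by
    have h3 : 3 * ∑ S ∈ P, m S ≤ ∑ S ∈ P, (2 + m S * m S) := by
      rw [Finset.mul_sum]
      exact Finset.sum_le_sum fun S _ => stmt6_three_mul_le (m S)
    have h5 : ∑ S ∈ P, (2 + m S * m S) = 2 * P.card + (∑ S ∈ P, m S + B) := by
      rw [Finset.sum_add_distrib, Finset.sum_const, smul_eq_mul, mul_comm]
      congr 1
      calc ∑ S ∈ P, m S * m S
          = ∑ S ∈ P, (m S + ∑ u ∈ T, ∑ v ∈ T.erase u, f u S * f v S) :=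
            Finset.sum_congr rfl fun S _ => hsq S
        _ = ∑ S ∈ P, m S + ∑ S ∈ P, ∑ u ∈ T, ∑ v ∈ T.erase u, f u S * f v S :=
            Finset.sum_add_distrib
        _ = ∑ S ∈ P, m S + ∑ u ∈ T, ∑ S ∈ P, ∑ v ∈ T.erase u, f u S * f v S := by
            congr 1; exact Finset.sum_comm
        _ = ∑ S ∈ P, m S + ∑ u ∈ T, ∑ v ∈ T.erase u, ∑ S ∈ P, f u S * f v S := by
            congr 1; exact Finset.sum_congr rfl fun u _ => Finset.sum_comm
        _ = ∑ S ∈ P, m S + B := by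
            rw [hB]; congr 1
            exact Finset.sum_congr rfl fun u _ =>
              Finset.sum_congr rfl fun v _ => hpair u v
    omega
  -- real-number bookkeeping
  set D : ℝ := ((n-1).choose r : ℝ) with hD
  have hD0 : (0:ℝ) ≤ D := Nat.cast_nonneg _
  have hTne : T.Nonempty := Finset.card_pos.mp (by rw [hT]; omega)
  set X : ℝ := ((∑ S ∈ P, m S : ℕ) : ℝ) with hX
  -- sum of degrees
  have hdegsum : (c+1 : ℝ) * ((1+γ) * D) < (c+1 : ℝ) * X := by
    have h1 : (c+1:ℝ) * ((1+γ)*D)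
        < ∑ w ∈ T, (c+1:ℝ) * ((H.filter (fun e => w ∈ e)).card : ℝ) := by
      have h2 : (c+1:ℝ) * ((1+γ)*D) = ∑ _w ∈ T, (1+γ)*D := by
        rw [Finset.sum_const, hT]; push_cast; ring
      rw [h2]
      exact Finset.sum_lt_sum_of_nonempty hTne fun w _ => hdeg w
    have h3 : ∑ w ∈ T, ((H.filter (fun e => w ∈ e)).card : ℝ) ≤ X := by
      rw [hX]
      have h4 : ∑ w ∈ T, (H.filter (fun e => w ∈ e)).card ≤ ∑ S ∈ P, m S :=
        le_of_le_of_eq (Finset.sum_le_sum fun w _ => hdegN w) hswap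
      exact_mod_cast h4
    calc (c+1:ℝ) * ((1+γ)*D)
        < ∑ w ∈ T, (c+1:ℝ) * ((H.filter (fun e => w ∈ e)).card : ℝ) := h1
      _ = (c+1:ℝ) * ∑ w ∈ T, ((H.filter (fun e => w ∈ e)).card : ℝ) :=
          (Finset.mul_sum _ _ _).symm
      _ ≤ (c+1:ℝ) * X := by
          apply mul_le_mul_of_nonneg_left h3; positivity
  -- bound on B
  have hBR : (B : ℝ) ≤ (c+1 : ℝ) * ((c:ℝ) * (2 * α * (n:ℝ)^r)) := by
    rw [hB]
    push_cast
    have hin : ∀ u ∈ T, ∑ v ∈ T.erase u,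
        ((P.filter (fun S => S ∪ {u} ∈ H ∧ S ∪ {v} ∈ H)).card : ℝ)
        ≤ (c:ℝ) * (2 * α * (n:ℝ)^r) := by
      intro u hu
      have hcard' : (T.erase u).card = c := by
        rw [Finset.card_erase_of_mem hu, hT]; omega
      calc ∑ v ∈ T.erase u,
          ((P.filter (fun S => S ∪ {u} ∈ H ∧ S ∪ {v} ∈ H)).card : ℝ)
          ≤ (T.erase u).card • (2 * α * (n:ℝ)^r) := by
            apply Finset.sum_le_card_nsmul
            intro v hv
            exact (hcon u hu v (Finset.mem_of_mem_erase hv)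
              (Finset.ne_of_mem_erase hv).symm).le
        _ = (c:ℝ) * (2 * α * (n:ℝ)^r) := by
            rw [hcard', nsmul_eq_mul]
    calc ∑ u ∈ T, ∑ v ∈ T.erase u,
        ((P.filter (fun S => S ∪ {u} ∈ H ∧ S ∪ {v} ∈ H)).card : ℝ)
        ≤ T.card • ((c:ℝ) * (2 * α * (n:ℝ)^r)) :=
          Finset.sum_le_card_nsmul _ _ _ hin
      _ = (c+1:ℝ) * ((c:ℝ) * (2 * α * (n:ℝ)^r)) := by
          rw [hT, nsmul_eq_mul]; push_cast; ring
  -- binomial identities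
  have hch1 : n.choose r = (n-1).choose (r-1) + (n-1).choose r := by
    have h := Nat.choose_succ_succ (n-1) (r-1)
    simp only [Nat.succ_eq_add_one] at h
    have e1 : n - 1 + 1 = n := by omega
    have e2 : r - 1 + 1 = r := by omega
    rw [e1, e2] at h
    exact h
  have hch2 : (n-1).choose r * r = (n-1).choose (r-1) * (n - r) := by
    have h := Nat.choose_succ_right_eq (n-1) (r-1)
    have e2 : r - 1 + 1 = r := by omega
    have e3 : n - 1 - (r - 1) = n - r := by omega
    rw [e2, e3] at h
    exact h
  set q : ℝ := ((n-1).choose (r-1) : ℝ) with hq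
  have hPc : (P.card : ℝ) = D + q := by
    rw [hP, Finset.card_powersetCard, Finset.card_univ, hcard, hch1]
    push_cast; ring
  -- key inequality: (c+1) * q ≤ γ * D
  have hnr : ((n - r : ℕ) : ℝ) = (n:ℝ) - (r:ℝ) := by
    push_cast [Nat.cast_sub hrn.le]; ring
  have hγnr : (c+1:ℝ) * (r:ℝ) ≤ γ * ((n:ℝ) - (r:ℝ)) := by
    have h1 : (⌈((c+1)*(k-1) : ℝ)/γ⌉₊ : ℕ) ≤ n - k := by omega
    have h2 : ((c+1)*((k:ℝ)-1))/γ ≤ ((n - k : ℕ) : ℝ) := by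
      refine le_trans (Nat.le_ceil _) ?_
      exact_mod_cast h1
    have h3 : ((n - k : ℕ) : ℝ) = (n:ℝ) - (k:ℝ) := by
      push_cast [Nat.cast_sub hnk]; ring
    rw [h3] at h2
    have h4 : (c+1:ℝ)*((k:ℝ)-1) ≤ γ * ((n:ℝ) - (k:ℝ)) := by
      rw [div_le_iff₀ hγ] at h2; linarith [h2]
    have h5 : (r:ℝ) = (k:ℝ) - 1 := by
      rw [hr]; push_cast [Nat.cast_sub (by omega : 1 ≤ k)]; ring
    rw [h5]
    nlinarith [h4, hγ.le, Nat.cast_nonneg (α := ℝ) c]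
  have hqD : (c+1:ℝ) * q ≤ γ * D := by
    have hnr0 : (0:ℝ) < (n:ℝ) - (r:ℝ) := by
      have : (r:ℝ) < (n:ℝ) := by exact_mod_cast hrn
      linarith
    have hch2R : D * (r:ℝ) = q * ((n:ℝ) - (r:ℝ)) := by
      have := hch2
      have hcast : (((n-1).choose r * r : ℕ) : ℝ)
          = (((n-1).choose (r-1) * (n - r) : ℕ) : ℝ) := by exact_mod_cast this
      push_cast at hcast
      rw [hD, hq, ← hnr]
      push_cast
      exact_mod_cast hcast
    rw [← mul_le_mul_iff_left₀ hnr0]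
    have hq0 : (0:ℝ) ≤ q := Nat.cast_nonneg _
    calc (c+1:ℝ) * q * ((n:ℝ) - (r:ℝ)) = (c+1:ℝ) * (q * ((n:ℝ) - (r:ℝ))) := by ring
      _ = (c+1:ℝ) * (D * (r:ℝ)) := by rw [hch2R]
      _ = D * ((c+1:ℝ) * (r:ℝ)) := by ring
      _ ≤ D * (γ * ((n:ℝ) - (r:ℝ))) := mul_le_mul_of_nonneg_left hγnr hD0
      _ = γ * D * ((n:ℝ) - (r:ℝ)) := by ring
  -- combine everything
  have hc1R : (0:ℝ) ≤ (c:ℝ) + 1 := by positivity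
  have hkeyR : 2 * X ≤ 2 * ((P.card : ℕ) : ℝ) + (B : ℝ) := by
    rw [hX]; exact_mod_cast hkey
  have F2m : ((c:ℝ)+1) * (2 * X) ≤ ((c:ℝ)+1) * (2 * ((P.card : ℕ) : ℝ) + (B:ℝ)) :=
    mul_le_mul_of_nonneg_left hkeyR hc1R
  have F3m : ((c:ℝ)+1) * (B:ℝ) ≤ ((c:ℝ)+1) * ((c+1:ℝ) * ((c:ℝ) * (2 * α * (n:ℝ)^r))) :=
    mul_le_mul_of_nonneg_left hBR hc1R
  have F6m : (2*(c:ℝ)) * ((c + 1 : ℝ)^2 * α * (n : ℝ)^r) ≤ (2*(c:ℝ)) * (γ * D) :=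
    mul_le_mul_of_nonneg_left hsmall.le (by positivity)
  nlinarith [hdegsum, F2m, F3m, F6m, hqD, hPc, hD0, hγ]
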